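/- Let A be a commutative ring, B an A[t]-algebra, B_1 an A-algebra, and θ: B ⊗_{A[t]} A[t,t^{-1}] ≅ B_1 ⊗_A A[t,t^{-1}] an isomorphism of A[t,t^{-1}]-algebras. Suppose B has a generating set {b_α} with θ(b_α) = c_α ⊗ t^{n_α} for some c_α ∈ B_1 and n_α ∈ Z. Then the automorphism β of B_1 ⊗_A A[t,t^{-1},s,s^{-1}] determined by b_1 ↦ b_1, t ↦ st, s ↦ s restricts to an automorphism of the subalgebra θ(B) ⊗_{A[t]} A[t,s,s^{-1}]. -/

import Mathlib

/-!
STATEMENT 4: Let `A` be a commutative ring, `B` an `A[t]`-algebra, `B₁` an `A`-algebra,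
and `θ : B ⊗_{A[t]} A[t,t⁻¹] ≅ B₁ ⊗_A A[t,t⁻¹]` an isomorphism (compatible with the
`A[t,t⁻¹]`-structures). Suppose `B` has a generating set `{b_α}` with
`θ(b_α) = c_α ⊗ t^{n_α}`. Then the automorphism `β` of `B₁ ⊗_A A[t,t⁻¹,s,s⁻¹]` determined
by `b₁ ↦ b₁`, `t ↦ st`, `s ↦ s` restricts to an automorphism of the subalgebra
`θ(B) ⊗_{A[t]} A[t,s,s⁻¹]`.

We model `A[t,t⁻¹,s,s⁻¹]` as the group algebra `A[ℤ × ℤ]` (first coordinate: powers of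
`t`, second: powers of `s`), and `β` as induced by the shearing `(a,b) ↦ (a, a+b)`.
-/

open Polynomial LaurentPolynomial TensorProduct

/-- The shearing `t^a s^b ↦ t^a s^{a+b}` (i.e. `t ↦ st`, `s ↦ s`). -/
def shear : ℤ × ℤ ≃+ ℤ × ℤ where
  toFun p := (p.1, p.1 + p.2)
  invFun p := (p.1, p.2 - p.1)
  left_inv p := by simp
  right_inv p := by simp
  map_add' p q := by
    simp only [Prod.fst_add, Prod.snd_add, Prod.mk_add_mk, Prod.mk.injEq]
    exact ⟨trivial, by ring⟩

lemma shear_apply (p : ℤ × ℤ) : shear p = (p.1, p.1 + p.2) := rfl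

lemma shear_symm_apply (p : ℤ × ℤ) : shear.symm p = (p.1, p.2 - p.1) := rfl

theorem beta_preserves_integral_structure
    (A : Type*) [CommRing A]
    (B : Type*) [CommRing B] [Algebra A[X] B] [Algebra A B] [IsScalarTower A A[X] B]
    (B₁ : Type*) [CommRing B₁] [Algebra A B₁]
    -- `θ : B ⊗_{A[t]} A[t,t⁻¹] ≃ B₁ ⊗_A A[t,t⁻¹]`, compatible with `t`
    (θ : (B ⊗[A[X]] A[T;T⁻¹]) ≃ₐ[A] (B₁ ⊗[A] A[T;T⁻¹]))
    (hθT : ∀ l : A[T;T⁻¹], θ ((1 : B) ⊗ₜ[A[X]] l) = (1 : B₁) ⊗ₜ[A] l)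
    -- a generating set of `B` sent by `θ` to pure monomial tensors
    (Sgen : Set B) (hgen : Algebra.adjoin A[X] Sgen = ⊤)
    (hmono : ∀ b ∈ Sgen, ∃ (c : B₁) (n : ℤ),
      θ (b ⊗ₜ[A[X]] 1) = c ⊗ₜ[A] (T n)) :
    -- `β := id ⊗ (t ↦ st, s ↦ s)` on `B₁ ⊗_A A[t,t⁻¹,s,s⁻¹]`
    letI β : (B₁ ⊗[A] AddMonoidAlgebra A (ℤ × ℤ)) ≃ₐ[A] (B₁ ⊗[A] AddMonoidAlgebra A (ℤ × ℤ)) :=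
      Algebra.TensorProduct.congr (AlgEquiv.refl (R := A) (A₁ := B₁))
        (AddMonoidAlgebra.domCongr A A shear)
    -- the inclusion `B₁ ⊗ A[t,t⁻¹] → B₁ ⊗ A[t,t⁻¹,s,s⁻¹]`, `t ↦ t`
    letI ι : (B₁ ⊗[A] A[T;T⁻¹]) →ₐ[A] (B₁ ⊗[A] AddMonoidAlgebra A (ℤ × ℤ)) :=
      Algebra.TensorProduct.map (AlgHom.id A B₁)
        (AddMonoidAlgebra.mapDomainAlgHom A A
          (AddMonoidHom.inl ℤ ℤ))
    -- the subalgebra `θ(B) ⊗_{A[t]} A[t,s,s⁻¹]`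
    letI C : Subalgebra A (B₁ ⊗[A] AddMonoidAlgebra A (ℤ × ℤ)) :=
      Algebra.adjoin A
        ((Set.range fun b : B => ι (θ (b ⊗ₜ[A[X]] 1))) ∪
          {z | ∃ (a b : ℤ), 0 ≤ a ∧
            z = (1 : B₁) ⊗ₜ[A]
              (AddMonoidAlgebra.single ((a, b) : ℤ × ℤ) (1 : A) : AddMonoidAlgebra A (ℤ × ℤ))})
    Subalgebra.map β.toAlgHom C = C := by
  set β : (B₁ ⊗[A] AddMonoidAlgebra A (ℤ × ℤ)) ≃ₐ[A] (B₁ ⊗[A] AddMonoidAlgebra A (ℤ × ℤ)) :=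
    Algebra.TensorProduct.congr (AlgEquiv.refl (R := A) (A₁ := B₁))
      (AddMonoidAlgebra.domCongr A A shear) with βdef
  set ι : (B₁ ⊗[A] A[T;T⁻¹]) →ₐ[A] (B₁ ⊗[A] AddMonoidAlgebra A (ℤ × ℤ)) :=
    Algebra.TensorProduct.map (AlgHom.id A B₁)
      (AddMonoidAlgebra.mapDomainAlgHom A A (AddMonoidHom.inl ℤ ℤ)) with ιdef
  set C : Subalgebra A (B₁ ⊗[A] AddMonoidAlgebra A (ℤ × ℤ)) :=
    Algebra.adjoin A
      ((Set.range fun b : B => ι (θ (b ⊗ₜ[A[X]] 1))) ∪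
        {z | ∃ (a b : ℤ), 0 ≤ a ∧
          z = (1 : B₁) ⊗ₜ[A]
            (AddMonoidAlgebra.single ((a, b) : ℤ × ℤ) (1 : A) : AddMonoidAlgebra A (ℤ × ℤ))}) with Cdef
  -- membership of the two kinds of generators
  have mem2 : ∀ a b : ℤ, 0 ≤ a →
      (1 : B₁) ⊗ₜ[A] (AddMonoidAlgebra.single ((a, b) : ℤ × ℤ) (1 : A) : AddMonoidAlgebra A (ℤ × ℤ)) ∈ C := by
    intro a b ha
    rw [Cdef]
    exact Algebra.subset_adjoin (Or.inr ⟨a, b, ha, rfl⟩)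
  have mem1 : ∀ b : B, ι (θ (b ⊗ₜ[A[X]] 1)) ∈ C := by
    intro b
    rw [Cdef]
    exact Algebra.subset_adjoin (Or.inl ⟨b, rfl⟩)
  -- computation lemmas
  have hι : ∀ (c : B₁) (n : ℤ), ι (c ⊗ₜ[A] T n) =
      c ⊗ₜ[A] (AddMonoidAlgebra.single ((n, 0) : ℤ × ℤ) (1 : A) : AddMonoidAlgebra A (ℤ × ℤ)) := by
    intro c n
    rw [ιdef]
    simp only [Algebra.TensorProduct.map_tmul, AlgHom.coe_id, id_eq,
      AddMonoidAlgebra.mapDomainAlgHom_apply, LaurentPolynomial.T,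
      AddMonoidAlgebra.mapDomain_single, AddMonoidHom.inl_apply]
  have hβs : ∀ (c : B₁) (p : ℤ × ℤ), β (c ⊗ₜ[A] (AddMonoidAlgebra.single p (1 : A))) =
      c ⊗ₜ[A] (AddMonoidAlgebra.single ((p.1, p.1 + p.2) : ℤ × ℤ) (1 : A)) := by
    intro c p
    rw [βdef]
    simp [Algebra.TensorProduct.congr_apply, shear_apply]
  have hβss : ∀ (c : B₁) (p : ℤ × ℤ), β.symm (c ⊗ₜ[A] (AddMonoidAlgebra.single p (1 : A))) =
      c ⊗ₜ[A] (AddMonoidAlgebra.single ((p.1, p.2 - p.1) : ℤ × ℤ) (1 : A)) := by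
    intro c p
    rw [βdef]
    simp [Algebra.TensorProduct.congr_symm_apply, shear_symm_apply]
  -- factoring a pure monomial tensor
  have hfac : ∀ (c : B₁) (n m : ℤ),
      c ⊗ₜ[A] (AddMonoidAlgebra.single ((n, m) : ℤ × ℤ) (1 : A) : AddMonoidAlgebra A (ℤ × ℤ)) =
        ((c ⊗ₜ[A] (AddMonoidAlgebra.single ((n, 0) : ℤ × ℤ) (1 : A) : AddMonoidAlgebra A (ℤ × ℤ)) :
            B₁ ⊗[A] AddMonoidAlgebra A (ℤ × ℤ)) *
          ((1 : B₁) ⊗ₜ[A]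
            (AddMonoidAlgebra.single ((0, m) : ℤ × ℤ) (1 : A) : AddMonoidAlgebra A (ℤ × ℤ)) :
            B₁ ⊗[A] AddMonoidAlgebra A (ℤ × ℤ)) :
          B₁ ⊗[A] AddMonoidAlgebra A (ℤ × ℤ)) := by
    intro c n m
    have h := AddMonoidAlgebra.single_mul_single (R := A) (M := ℤ × ℤ)
      (m₁ := ((n, 0) : ℤ × ℤ)) (r₁ := (1 : A)) (m₂ := ((0, m) : ℤ × ℤ)) (r₂ := (1 : A))
    rw [show ((n, 0) + (0, m) : ℤ × ℤ) = (n, m) by simp, mul_one] at h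
    have h2 := Algebra.TensorProduct.tmul_mul_tmul (R := A) c (1 : B₁)
      (AddMonoidAlgebra.single ((n, 0) : ℤ × ℤ) (1 : A))
      (AddMonoidAlgebra.single ((0, m) : ℤ × ℤ) (1 : A))
    rw [mul_one] at h2
    exact (h2.trans (congrArg (fun y => c ⊗ₜ[A] y) h)).symm
  -- the main argument, done uniformly for `β` and `β.symm`
  have main : ∀ (e : (B₁ ⊗[A] AddMonoidAlgebra A (ℤ × ℤ)) ≃ₐ[A]
        (B₁ ⊗[A] AddMonoidAlgebra A (ℤ × ℤ))) (f : ℤ → ℤ) (g : ℤ → ℤ → ℤ),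
      (∀ (c : B₁) (n : ℤ),
        e (c ⊗ₜ[A] (AddMonoidAlgebra.single ((n, 0) : ℤ × ℤ) (1 : A) : AddMonoidAlgebra A (ℤ × ℤ))) =
          c ⊗ₜ[A] (AddMonoidAlgebra.single ((n, f n) : ℤ × ℤ) (1 : A) : AddMonoidAlgebra A (ℤ × ℤ))) →
      (∀ a b : ℤ,
        e ((1 : B₁) ⊗ₜ[A]
            (AddMonoidAlgebra.single ((a, b) : ℤ × ℤ) (1 : A) : AddMonoidAlgebra A (ℤ × ℤ))) =
          (1 : B₁) ⊗ₜ[A]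
            (AddMonoidAlgebra.single ((a, g a b) : ℤ × ℤ) (1 : A) : AddMonoidAlgebra A (ℤ × ℤ))) →
      Subalgebra.map e.toAlgHom C ≤ C := by
    intro e f g hef heg
    -- first: images of the `B`-generators stay in `C`
    have hB : ∀ b : B, e (ι (θ (b ⊗ₜ[A[X]] 1))) ∈ C := by
      intro b
      have hb : b ∈ Algebra.adjoin A[X] Sgen := hgen ▸ Algebra.mem_top
      induction hb using Algebra.adjoin_induction with
      | mem x hx =>
        obtain ⟨c, n, hcn⟩ := hmono x hx
        have h1 : ι (θ (x ⊗ₜ[A[X]] 1)) =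
            c ⊗ₜ[A] (AddMonoidAlgebra.single ((n, 0) : ℤ × ℤ) (1 : A) : AddMonoidAlgebra A (ℤ × ℤ)) := by
          rw [hcn, hι]
        rw [h1, hef, hfac]
        exact C.mul_mem (h1 ▸ mem1 x) (mem2 0 (f n) le_rfl)
      | algebraMap p =>
        have h1 : (algebraMap A[X] B p) ⊗ₜ[A[X]] (1 : A[T;T⁻¹]) =
            (1 : B) ⊗ₜ[A[X]] (algebraMap A[X] A[T;T⁻¹] p) := by
          rw [Algebra.algebraMap_eq_smul_one (A := B), Algebra.algebraMap_eq_smul_one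
            (A := A[T;T⁻¹]), TensorProduct.smul_tmul]
        rw [h1, hθT]
        -- reduce to the single generator `X`
        set G : A[X] →ₐ[A] (B₁ ⊗[A] AddMonoidAlgebra A (ℤ × ℤ)) :=
          e.toAlgHom.comp (ι.comp ((Algebra.TensorProduct.includeRight :
            A[T;T⁻¹] →ₐ[A] B₁ ⊗[A] A[T;T⁻¹]).comp Polynomial.toLaurentAlg)) with hG
        have hGp : G p = e (ι ((1 : B₁) ⊗ₜ[A] (algebraMap A[X] A[T;T⁻¹] p))) := by
          simp only [hG, AlgHom.coe_comp, Function.comp_apply, AlgEquiv.toAlgHom_eq_coe,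
            AlgEquiv.coe_algHom, AlgHom.coe_coe, Algebra.TensorProduct.includeRight_apply,
            Polynomial.toLaurentAlg_apply, LaurentPolynomial.algebraMap_eq_toLaurent]
        rw [← hGp]
        have hX : G Polynomial.X ∈ C := by
          have h2 : G Polynomial.X = e ((1 : B₁) ⊗ₜ[A]
              (AddMonoidAlgebra.single ((1, 0) : ℤ × ℤ) (1 : A) : AddMonoidAlgebra A (ℤ × ℤ))) := by
            simp only [hG, AlgHom.coe_comp, Function.comp_apply, AlgEquiv.toAlgHom_eq_coe,
              AlgEquiv.coe_algHom, AlgHom.coe_coe, Algebra.TensorProduct.includeRight_apply,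
              Polynomial.toLaurentAlg_apply, Polynomial.toLaurent_X, hι]
          rw [h2, heg]
          exact mem2 1 (g 1 0) zero_le_one
        have hp : p ∈ Algebra.adjoin A ({Polynomial.X} : Set A[X]) := by
          rw [Polynomial.adjoin_X]; exact Algebra.mem_top
        have : G p ∈ Subalgebra.map G (Algebra.adjoin A ({Polynomial.X} : Set A[X])) :=
          ⟨p, hp, rfl⟩
        rw [AlgHom.map_adjoin, Set.image_singleton] at this
        exact Algebra.adjoin_le (Set.singleton_subset_iff.2 hX) this
      | add x y hx hy ihx ihy =>
        have : (x + y) ⊗ₜ[A[X]] (1 : A[T;T⁻¹]) = x ⊗ₜ[A[X]] 1 + y ⊗ₜ[A[X]] 1 :=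
          TensorProduct.add_tmul x y 1
        rw [this, map_add, map_add, map_add]
        exact C.add_mem ihx ihy
      | mul x y hx hy ihx ihy =>
        have : (x * y) ⊗ₜ[A[X]] (1 : A[T;T⁻¹]) = (x ⊗ₜ[A[X]] 1) * (y ⊗ₜ[A[X]] 1) := by
          rw [Algebra.TensorProduct.tmul_mul_tmul, mul_one]
        rw [this, map_mul, map_mul, map_mul]
        exact C.mul_mem ihx ihy
    -- conclude
    rw [Cdef, AlgHom.map_adjoin]
    apply Algebra.adjoin_le
    rintro x ⟨z, hz | ⟨a, b, ha, rfl⟩, rfl⟩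
    · obtain ⟨b, rfl⟩ := hz
      exact hB b
    · have := heg a b
      change e _ ∈ C
      rw [this]
      exact mem2 a (g a b) ha
  have hβC : Subalgebra.map β.toAlgHom C ≤ C := by
    refine main β (fun n => n) (fun a b => a + b) ?_ ?_
    · intro c n; rw [hβs]; norm_num
    · intro a b; rw [hβs]
  have hβsC : Subalgebra.map β.symm.toAlgHom C ≤ C := by
    refine main β.symm (fun n => -n) (fun a b => b - a) ?_ ?_
    · intro c n; rw [hβss]; norm_num
    · intro a b; rw [hβss]
  refine le_antisymm hβC ?_
  have h1 : Subalgebra.map β.toAlgHom (Subalgebra.map β.symm.toAlgHom C) = C := by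
    have hcomp : β.toAlgHom.comp β.symm.toAlgHom =
        AlgHom.id A (B₁ ⊗[A] AddMonoidAlgebra A (ℤ × ℤ)) :=
      AlgHom.ext fun x => β.apply_symm_apply x
    rw [Subalgebra.map_map, hcomp, Subalgebra.map_id]
  calc C = Subalgebra.map β.toAlgHom (Subalgebra.map β.symm.toAlgHom C) := h1.symm
    _ ≤ Subalgebra.map β.toAlgHom C := Subalgebra.map_mono hβsC
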